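/- The map h ↦ X_h from functions to contact vector fields is a Lie algebra homomorphism: for all twice continuously differentiable functions h₁, h₂ : ℝ³ → ℝ and every twice continuously differentiable function φ : ℝ³ → ℝ in the variables (x, z, p), one has X_{{h₁,h₂}_L}(φ) = X_{h₁}(X_{h₂}(φ)) − X_{h₂}(X_{h₁}(φ)) at every point of ℝ³. -/

import Mathlib

/-- Partial derivative of `h : ℝ³ → ℝ` in the `i`-th coordinate.
Coordinates: `0 ↦ x`, `1 ↦ z`, `2 ↦ p`. -/
noncomputable def pd3 (i : Fin 3) (h : (Fin 3 → ℝ) → ℝ) (q : Fin 3 → ℝ) : ℝ :=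
  fderiv ℝ h q (Pi.single i 1)

lemma contDiff_pd3 {f : (Fin 3 → ℝ) → ℝ} (hf : ContDiff ℝ 2 f) (j : Fin 3) :
    ContDiff ℝ 1 (pd3 j f) :=
  (ContinuousLinearMap.apply ℝ ℝ (Pi.single j 1 : Fin 3 → ℝ)).contDiff.comp
    (hf.fderiv_right (by norm_num))

lemma diff_pd3 {f : (Fin 3 → ℝ) → ℝ} (hf : ContDiff ℝ 2 f) (j : Fin 3) (q : Fin 3 → ℝ) :
    DifferentiableAt ℝ (pd3 j f) q :=
  ((contDiff_pd3 hf j).differentiable (by norm_num)).differentiableAt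

lemma pd3_add (i : Fin 3) {f g : (Fin 3 → ℝ) → ℝ} {q : Fin 3 → ℝ}
    (hf : DifferentiableAt ℝ f q) (hg : DifferentiableAt ℝ g q) :
    pd3 i (fun x => f x + g x) q = pd3 i f q + pd3 i g q := by
  simp [pd3, fderiv_fun_add hf hg]

lemma pd3_sub (i : Fin 3) {f g : (Fin 3 → ℝ) → ℝ} {q : Fin 3 → ℝ}
    (hf : DifferentiableAt ℝ f q) (hg : DifferentiableAt ℝ g q) :
    pd3 i (fun x => f x - g x) q = pd3 i f q - pd3 i g q := by
  simp [pd3, fderiv_fun_sub hf hg]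

lemma pd3_mul (i : Fin 3) {f g : (Fin 3 → ℝ) → ℝ} {q : Fin 3 → ℝ}
    (hf : DifferentiableAt ℝ f q) (hg : DifferentiableAt ℝ g q) :
    pd3 i (fun x => f x * g x) q = pd3 i f q * g q + f q * pd3 i g q := by
  simp [pd3, fderiv_fun_mul hf hg]; ring

lemma pd3_coord (i : Fin 3) (q : Fin 3 → ℝ) :
    pd3 i (fun x => x 2) q = (Pi.single i 1 : Fin 3 → ℝ) 2 := by
  have h : fderiv ℝ (fun x : Fin 3 → ℝ => x 2) q
      = (ContinuousLinearMap.proj 2 : (Fin 3 → ℝ) →L[ℝ] ℝ) :=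
    (ContinuousLinearMap.proj 2 : (Fin 3 → ℝ) →L[ℝ] ℝ).fderiv
  simp [pd3, h]

lemma diff_coord (q : Fin 3 → ℝ) : DifferentiableAt ℝ (fun x : Fin 3 → ℝ => x 2) q :=
  (ContinuousLinearMap.proj 2 : (Fin 3 → ℝ) →L[ℝ] ℝ).differentiableAt

lemma pd3_symm {f : (Fin 3 → ℝ) → ℝ} (hf : ContDiff ℝ 2 f) (i j : Fin 3) (q : Fin 3 → ℝ) :
    pd3 i (pd3 j f) q = pd3 j (pd3 i f) q := by
  have hd : ∀ y, HasFDerivAt f (fderiv ℝ f y) y := fun y =>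
    ((hf.differentiable (by norm_num)) y).hasFDerivAt
  have hd2 : HasFDerivAt (fderiv ℝ f) (fderiv ℝ (fderiv ℝ f) q) q :=
    (((hf.fderiv_right (m := 1) (by norm_num)).differentiable (by norm_num)) q).hasFDerivAt
  have sym := second_derivative_symmetric hd hd2
  have key : ∀ (v : Fin 3 → ℝ) (w : Fin 3), pd3 w (fun x => fderiv ℝ f x v) q
      = fderiv ℝ (fderiv ℝ f) q (Pi.single w 1) v := by
    intro v w
    have hc : HasFDerivAt (fun x => fderiv ℝ f x v)
        ((ContinuousLinearMap.apply ℝ ℝ v).comp (fderiv ℝ (fderiv ℝ f) q)) q :=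
      (ContinuousLinearMap.apply ℝ ℝ v).hasFDerivAt.comp q hd2
    rw [pd3, hc.fderiv]; simp
  have e1 : pd3 i (pd3 j f) q = fderiv ℝ (fderiv ℝ f) q (Pi.single i 1) (Pi.single j 1) :=
    key _ _
  have e2 : pd3 j (pd3 i f) q = fderiv ℝ (fderiv ℝ f) q (Pi.single j 1) (Pi.single i 1) :=
    key _ _
  rw [e1, e2, sym]
/-- The contact (Lagrange) bracket in the variables `(x, z, p) = (q 0, q 1, q 2)`:
`{h₁,h₂}_L = h₁ₚ h₂ₓ − h₂ₚ h₁ₓ − p (h₁ₚ h₂_z − h₂ₚ h₁_z) + h₁ h₂_z − h₂ h₁_z`. -/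
noncomputable def cbr3 (h₁ h₂ : (Fin 3 → ℝ) → ℝ) (q : Fin 3 → ℝ) : ℝ :=
  pd3 2 h₁ q * pd3 0 h₂ q - pd3 2 h₂ q * pd3 0 h₁ q
    - q 2 * (pd3 2 h₁ q * pd3 1 h₂ q - pd3 2 h₂ q * pd3 1 h₁ q)
    + h₁ q * pd3 1 h₂ q - h₂ q * pd3 1 h₁ q

/-- Action of the contact vector field `X_h` on a function `φ`:
`X_h(φ) = hₚ φₓ + (p h_z − hₓ) φₚ + (h − p hₚ) φ_z`, in coordinates `(x,z,p) = (q 0, q 1, q 2)`. -/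
noncomputable def X3 (h φ : (Fin 3 → ℝ) → ℝ) (q : Fin 3 → ℝ) : ℝ :=
  pd3 2 h q * pd3 0 φ q + (q 2 * pd3 1 h q - pd3 0 h q) * pd3 2 φ q
    + (h q - q 2 * pd3 2 h q) * pd3 1 φ q

lemma pd3_X3 (i : Fin 3) {h φ : (Fin 3 → ℝ) → ℝ} (hh : ContDiff ℝ 2 h) (hφ : ContDiff ℝ 2 φ)
    (q : Fin 3 → ℝ) :
    pd3 i (X3 h φ) q =
      pd3 i (pd3 2 h) q * pd3 0 φ q + pd3 2 h q * pd3 i (pd3 0 φ) q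
      + ((Pi.single i 1 : Fin 3 → ℝ) 2 * pd3 1 h q + q 2 * pd3 i (pd3 1 h) q
          - pd3 i (pd3 0 h) q) * pd3 2 φ q
      + (q 2 * pd3 1 h q - pd3 0 h q) * pd3 i (pd3 2 φ) q
      + ((pd3 i h q - ((Pi.single i 1 : Fin 3 → ℝ) 2 * pd3 2 h q
          + q 2 * pd3 i (pd3 2 h) q)) * pd3 1 φ q
        + (h q - q 2 * pd3 2 h q) * pd3 i (pd3 1 φ) q) := by
  have dh : DifferentiableAt ℝ h q := (hh.differentiable (by norm_num)) q
  have dA : DifferentiableAt ℝ (fun x => pd3 2 h x * pd3 0 φ x) q :=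
    (diff_pd3 hh 2 q).mul (diff_pd3 hφ 0 q)
  have dB : DifferentiableAt ℝ (fun x => (x 2 * pd3 1 h x - pd3 0 h x) * pd3 2 φ x) q :=
    (((diff_coord q).mul (diff_pd3 hh 1 q)).sub (diff_pd3 hh 0 q)).mul (diff_pd3 hφ 2 q)
  have hX : X3 h φ = fun x => pd3 2 h x * pd3 0 φ x
      + (x 2 * pd3 1 h x - pd3 0 h x) * pd3 2 φ x
      + (h x - x 2 * pd3 2 h x) * pd3 1 φ x := rfl
  rw [hX, pd3_add i (dA.fun_add dB)
        ((dh.fun_sub ((diff_coord q).fun_mul (diff_pd3 hh 2 q))).fun_mul (diff_pd3 hφ 1 q)),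
    pd3_add i dA dB,
    pd3_mul i (diff_pd3 hh 2 q) (diff_pd3 hφ 0 q),
    pd3_mul i (((diff_coord q).fun_mul (diff_pd3 hh 1 q)).fun_sub (diff_pd3 hh 0 q)) (diff_pd3 hφ 2 q),
    pd3_sub i ((diff_coord q).fun_mul (diff_pd3 hh 1 q)) (diff_pd3 hh 0 q),
    pd3_mul i (diff_coord q) (diff_pd3 hh 1 q),
    pd3_coord,
    pd3_mul i (dh.fun_sub ((diff_coord q).fun_mul (diff_pd3 hh 2 q))) (diff_pd3 hφ 1 q),
    pd3_sub i dh ((diff_coord q).fun_mul (diff_pd3 hh 2 q)),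
    pd3_mul i (diff_coord q) (diff_pd3 hh 2 q),
    pd3_coord]
  ring

lemma pd3_cbr3 (i : Fin 3) {h₁ h₂ : (Fin 3 → ℝ) → ℝ}
    (hh₁ : ContDiff ℝ 2 h₁) (hh₂ : ContDiff ℝ 2 h₂) (q : Fin 3 → ℝ) :
    pd3 i (cbr3 h₁ h₂) q =
      (pd3 i (pd3 2 h₁) q * pd3 0 h₂ q + pd3 2 h₁ q * pd3 i (pd3 0 h₂) q)
      - (pd3 i (pd3 2 h₂) q * pd3 0 h₁ q + pd3 2 h₂ q * pd3 i (pd3 0 h₁) q)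
      - ((Pi.single i 1 : Fin 3 → ℝ) 2 * (pd3 2 h₁ q * pd3 1 h₂ q - pd3 2 h₂ q * pd3 1 h₁ q)
          + q 2 * ((pd3 i (pd3 2 h₁) q * pd3 1 h₂ q + pd3 2 h₁ q * pd3 i (pd3 1 h₂) q)
            - (pd3 i (pd3 2 h₂) q * pd3 1 h₁ q + pd3 2 h₂ q * pd3 i (pd3 1 h₁) q)))
      + (pd3 i h₁ q * pd3 1 h₂ q + h₁ q * pd3 i (pd3 1 h₂) q)
      - (pd3 i h₂ q * pd3 1 h₁ q + h₂ q * pd3 i (pd3 1 h₁) q) := by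
  have dh₁ : DifferentiableAt ℝ h₁ q := (hh₁.differentiable (by norm_num)) q
  have dh₂ : DifferentiableAt ℝ h₂ q := (hh₂.differentiable (by norm_num)) q
  have dT1 : DifferentiableAt ℝ (fun x => pd3 2 h₁ x * pd3 0 h₂ x) q :=
    (diff_pd3 hh₁ 2 q).mul (diff_pd3 hh₂ 0 q)
  have dT2 : DifferentiableAt ℝ (fun x => pd3 2 h₂ x * pd3 0 h₁ x) q :=
    (diff_pd3 hh₂ 2 q).mul (diff_pd3 hh₁ 0 q)
  have dI : DifferentiableAt ℝ (fun x => pd3 2 h₁ x * pd3 1 h₂ x - pd3 2 h₂ x * pd3 1 h₁ x) q :=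
    ((diff_pd3 hh₁ 2 q).mul (diff_pd3 hh₂ 1 q)).sub ((diff_pd3 hh₂ 2 q).mul (diff_pd3 hh₁ 1 q))
  have dT3 : DifferentiableAt ℝ
      (fun x => x 2 * (pd3 2 h₁ x * pd3 1 h₂ x - pd3 2 h₂ x * pd3 1 h₁ x)) q :=
    (diff_coord q).mul dI
  have dT4 : DifferentiableAt ℝ (fun x => h₁ x * pd3 1 h₂ x) q := dh₁.mul (diff_pd3 hh₂ 1 q)
  have hC : cbr3 h₁ h₂ = fun x => pd3 2 h₁ x * pd3 0 h₂ x - pd3 2 h₂ x * pd3 0 h₁ x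
      - x 2 * (pd3 2 h₁ x * pd3 1 h₂ x - pd3 2 h₂ x * pd3 1 h₁ x)
      + h₁ x * pd3 1 h₂ x - h₂ x * pd3 1 h₁ x := rfl
  rw [hC,
    pd3_sub i (((dT1.fun_sub dT2).fun_sub dT3).fun_add dT4) (dh₂.fun_mul (diff_pd3 hh₁ 1 q)),
    pd3_add i ((dT1.fun_sub dT2).fun_sub dT3) dT4,
    pd3_sub i (dT1.fun_sub dT2) dT3,
    pd3_sub i dT1 dT2,
    pd3_mul i (diff_pd3 hh₁ 2 q) (diff_pd3 hh₂ 0 q),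
    pd3_mul i (diff_pd3 hh₂ 2 q) (diff_pd3 hh₁ 0 q),
    pd3_mul i (diff_coord q) dI,
    pd3_coord,
    pd3_sub i ((diff_pd3 hh₁ 2 q).fun_mul (diff_pd3 hh₂ 1 q))
      ((diff_pd3 hh₂ 2 q).fun_mul (diff_pd3 hh₁ 1 q)),
    pd3_mul i (diff_pd3 hh₁ 2 q) (diff_pd3 hh₂ 1 q),
    pd3_mul i (diff_pd3 hh₂ 2 q) (diff_pd3 hh₁ 1 q),
    pd3_mul i dh₁ (diff_pd3 hh₂ 1 q),
    pd3_mul i dh₂ (diff_pd3 hh₁ 1 q)]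

/-- The map `h ↦ X_h` is a Lie algebra homomorphism: for all twice continuously
differentiable `h₁ h₂ : ℝ³ → ℝ` and every twice continuously differentiable `φ : ℝ³ → ℝ`
in the variables `(x, z, p)`, one has
`X_{{h₁,h₂}_L}(φ) = X_{h₁}(X_{h₂}(φ)) − X_{h₂}(X_{h₁}(φ))` at every point of ℝ³. -/
theorem contact_field_lie_algebra_hom (h₁ h₂ φ : (Fin 3 → ℝ) → ℝ)
    (hh₁ : ContDiff ℝ 2 h₁) (hh₂ : ContDiff ℝ 2 h₂) (hφ : ContDiff ℝ 2 φ)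
    (q : Fin 3 → ℝ) :
    X3 (cbr3 h₁ h₂) φ q = X3 h₁ (X3 h₂ φ) q - X3 h₂ (X3 h₁ φ) q := by
  have s0 : (Pi.single (0:Fin 3) 1 : Fin 3 → ℝ) 2 = 0 := Pi.single_eq_of_ne (by decide) 1
  have s1 : (Pi.single (1:Fin 3) 1 : Fin 3 → ℝ) 2 = 0 := Pi.single_eq_of_ne (by decide) 1
  have s2 : (Pi.single (2:Fin 3) 1 : Fin 3 → ℝ) 2 = 1 := Pi.single_eq_same 2 1
  simp only [X3, cbr3, pd3_X3 _ hh₁ hφ, pd3_X3 _ hh₂ hφ,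
    pd3_cbr3 _ hh₁ hh₂, s0, s1, s2,
    pd3_symm hh₁ 1 0, pd3_symm hh₁ 2 0, pd3_symm hh₁ 2 1,
    pd3_symm hh₂ 1 0, pd3_symm hh₂ 2 0, pd3_symm hh₂ 2 1,
    pd3_symm hφ 1 0, pd3_symm hφ 2 0, pd3_symm hφ 2 1]
  ring
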